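/- Let (M, d₀) be a nonempty compact metric space in which every pair of points p₁, p₂ admits a midpoint (a point x with d₀(p₁,x) + d₀(x,p₂) = d₀(p₁,p₂)), and let μ be a finite Borel measure on M with μ(M) > 0 and μ(B(x,r)) > 0 for every open ball B(x,r). Let d_j (j ∈ ℕ) be metrics on M, Borel measurable as functions on M × M, with d_j(p,q) ≥ d₀(p,q) for all p,q and d_j → d₀ pointwise (μ × μ)-almost everywhere on M × M. Let μ_j be finite Borel measures on M with μ ≤ μ_j and μ_j(M) → μ(M). Then for every η > 0 there exists j₀ such that for all j ≥ j₀ there is a Borel set W_j ⊆ M with μ_j(M \ W_j) ≤ η and d₀(p,q) ≤ d_j(p,q) ≤ d₀(p,q) + η for all p,q ∈ W_j. -/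

import Mathlib

open MeasureTheory Filter Metric

/-- Metric–measure core of Theorem 4.1: given a nonempty compact metric space `(M, d₀)`
with midpoints, a finite Borel measure `μ` positive on balls, metrics `d_j ≥ d₀` converging
to `d₀` pointwise `(μ × μ)`-a.e., and finite Borel measures `μ_j ≥ μ` with `μ_j(M) → μ(M)`,
then for every `η > 0` there eventually exist good sets `W_j` with `μ_j(M \ W_j) ≤ η` on
which `d₀ ≤ d_j ≤ d₀ + η`. -/
theorem exists_good_sets_of_ae_tendsto_and_measure_tendsto
    {M : Type*} [MetricSpace M] [CompactSpace M] [Nonempty M]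
    [MeasurableSpace M] [BorelSpace M]
    (hmid : ∀ p₁ p₂ : M, ∃ x : M, dist p₁ x + dist x p₂ = dist p₁ p₂)
    (μ : Measure M) [IsFiniteMeasure μ]
    (hμpos : 0 < μ Set.univ)
    (hballs : ∀ (x : M) (r : ℝ), 0 < r → 0 < μ (ball x r))
    (dj : ℕ → M → M → ℝ)
    -- each d_j is a metric on M, Borel measurable as a function on M × M
    (hself : ∀ j a, dj j a a = 0)
    (heq : ∀ j a b, dj j a b = 0 → a = b)
    (hsymm : ∀ j a b, dj j a b = dj j b a)
    (htri : ∀ j a b c, dj j a c ≤ dj j a b + dj j b c)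
    (hmeas : ∀ j, Measurable (fun x : M × M => dj j x.1 x.2))
    -- d_j ≥ d₀ and d_j → d₀ pointwise (μ × μ)-a.e.
    (hge : ∀ j (p q : M), dist p q ≤ dj j p q)
    (hconv : ∀ᵐ x ∂(μ.prod μ),
      Tendsto (fun j => dj j x.1 x.2) atTop (nhds (dist x.1 x.2)))
    (μj : ℕ → Measure M) [∀ j, IsFiniteMeasure (μj j)]
    (hμle : ∀ j, μ ≤ μj j)
    (hμtot : Tendsto (fun j => μj j Set.univ) atTop (nhds (μ Set.univ))) :
    ∀ η : ℝ, 0 < η → ∃ j₀ : ℕ, ∀ j ≥ j₀, ∃ W : Set M, MeasurableSet W ∧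
      μj j Wᶜ ≤ ENNReal.ofReal η ∧
      ∀ p ∈ W, ∀ q ∈ W, dist p q ≤ dj j p q ∧ dj j p q ≤ dist p q + η := by
  intro η hη
  have hη4 : (0 : ℝ) < η / 4 := by linarith
  have hη8 : (0 : ℝ) < η / 8 := by linarith
  -- Finite cover by small balls, giving a uniform lower bound on measures of balls of radius η/4
  obtain ⟨t, ht⟩ := isCompact_univ.elim_finite_subcover (fun c : M => ball c (η / 8))
    (fun _ => isOpen_ball) (fun x _ => Set.mem_iUnion.2 ⟨x, mem_ball_self hη8⟩)
  have htne : t.Nonempty := by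
    obtain ⟨x⟩ := ‹Nonempty M›
    obtain ⟨c, hc, _⟩ := Set.mem_iUnion₂.1 (ht (Set.mem_univ x))
    exact ⟨c, hc⟩
  set m : ENNReal := t.inf' htne (fun c => μ (ball c (η / 8))) with hm_def
  have hm_pos : 0 < m := by
    rw [hm_def, Finset.lt_inf'_iff]
    exact fun c _ => hballs c (η / 8) hη8
  have hm_ne_top : m ≠ ⊤ := by
    obtain ⟨c, hc⟩ := htne
    exact ne_top_of_le_ne_top (measure_ne_top μ _) (Finset.inf'_le _ hc)
  have hm_ball : ∀ x : M, m ≤ μ (ball x (η / 4)) := by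
    intro x
    obtain ⟨c, hc, hxc⟩ := Set.mem_iUnion₂.1 (ht (Set.mem_univ x))
    refine le_trans (Finset.inf'_le _ hc) (measure_mono fun y hy => ?_)
    rw [mem_ball] at hxc hy ⊢
    have h1 : dist y x ≤ dist y c + dist c x := dist_triangle y c x
    have h2 : dist c x = dist x c := dist_comm c x
    linarith
  set mR : ℝ := m.toReal with hmR_def
  have hmR_pos : 0 < mR := ENNReal.toReal_pos hm_pos.ne' hm_ne_top
  have hm_eq : m = ENNReal.ofReal mR := (ENNReal.ofReal_toReal hm_ne_top).symm
  set κ : ENNReal := ENNReal.ofReal (mR / 4) with hκ_def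
  have hκ0 : κ ≠ 0 := by
    simp only [hκ_def, ne_eq, ENNReal.ofReal_eq_zero, not_le]
    linarith
  have hκtop : κ ≠ ⊤ := ENNReal.ofReal_ne_top
  -- Egoroff
  have hgsm : StronglyMeasurable (fun x : M × M => dist x.1 x.2) :=
    continuous_dist.stronglyMeasurable
  obtain ⟨tbad, htbadm, htbadμ, hunif⟩ :=
    tendstoUniformlyOn_of_ae_tendsto' (μ := μ.prod μ)
      (fun j => (hmeas j).stronglyMeasurable) hgsm hconv
      (show (0 : ℝ) < mR / 4 * (η / 2) by positivity)
  -- The slice-measure function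
  set f : M → ENNReal := fun p => μ (Prod.mk p ⁻¹' tbad) with hf_def
  have hfm : Measurable f := measurable_measure_prodMk_left htbadm
  set W : Set M := {p | f p ≤ κ} with hW_def
  have hWm : MeasurableSet W := measurableSet_le hfm measurable_const
  -- Chebyshev: μ Wᶜ ≤ ofReal (η/2)
  have hcheb : μ Wᶜ ≤ ENNReal.ofReal (η / 2) := by
    have h1 : κ * μ {p | κ ≤ f p} ≤ ∫⁻ p, f p ∂μ :=
      mul_meas_ge_le_lintegral₀ hfm.aemeasurable κ
    have h2 : ∫⁻ p, f p ∂μ = (μ.prod μ) tbad := (Measure.prod_apply htbadm).symm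
    have h3 : ENNReal.ofReal (mR / 4 * (η / 2)) = κ * ENNReal.ofReal (η / 2) := by
      rw [hκ_def, ← ENNReal.ofReal_mul (by positivity)]
    have h4 : κ * μ {p | κ ≤ f p} ≤ κ * ENNReal.ofReal (η / 2) := by
      calc κ * μ {p | κ ≤ f p} ≤ (μ.prod μ) tbad := h2 ▸ h1
        _ ≤ ENNReal.ofReal (mR / 4 * (η / 2)) := htbadμ
        _ = κ * ENNReal.ofReal (η / 2) := h3
    have h5 : μ {p | κ ≤ f p} ≤ ENNReal.ofReal (η / 2) :=
      (ENNReal.mul_le_mul_iff_right hκ0 hκtop).1 h4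
    refine le_trans (measure_mono fun p hp => ?_) h5
    exact le_of_lt (lt_of_not_ge (by simpa [hW_def] using hp))
  -- Key nonemptiness: for p q ∈ W and any x, a common good point exists near x
  have hkey : ∀ p ∈ W, ∀ q ∈ W, ∀ x : M,
      (ball x (η / 4) \ (Prod.mk p ⁻¹' tbad ∪ Prod.mk q ⁻¹' tbad)).Nonempty := by
    intro p hp q hq x
    rw [Set.nonempty_iff_ne_empty]
    intro hcon
    rw [Set.diff_eq_empty] at hcon
    have hb : μ (ball x (η / 4)) ≤ κ + κ :=
      le_trans (measure_mono hcon) ((measure_union_le _ _).trans (add_le_add hp hq))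
    have hlt : κ + κ < m := by
      rw [hκ_def, hm_eq, ← ENNReal.ofReal_add (by positivity) (by positivity)]
      rw [ENNReal.ofReal_lt_ofReal_iff hmR_pos]
      linarith
    exact absurd (le_trans (hm_ball x) hb) (not_le_of_gt hlt)
  -- Choose j₀
  have hev1 : ∀ᶠ j in atTop, ∀ y ∈ tbadᶜ,
      dist (dist y.1 y.2) (dj j y.1 y.2) < η / 4 :=
    (Metric.tendstoUniformlyOn_iff.1 hunif) (η / 4) hη4
  have hev2 : ∀ᶠ j in atTop, μj j Set.univ < μ Set.univ + ENNReal.ofReal (η / 2) := by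
    refine hμtot.eventually_lt_const ?_
    refine ENNReal.lt_add_right (measure_ne_top μ _) ?_
    simp only [ne_eq, ENNReal.ofReal_eq_zero, not_le]
    linarith
  obtain ⟨j₀, hj₀⟩ := eventually_atTop.1 (hev1.and hev2)
  refine ⟨j₀, fun j hj => ⟨W, hWm, ?_, ?_⟩⟩
  · -- measure bound
    obtain ⟨_, hj2⟩ := hj₀ j hj
    have key : μj j Wᶜ + μj j W ≤ ENNReal.ofReal η + μj j W := by
      have hhalf : ENNReal.ofReal (η / 2) + ENNReal.ofReal (η / 2) = ENNReal.ofReal η := by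
        rw [← ENNReal.ofReal_add (by linarith) (by linarith)]
        norm_num
      calc μj j Wᶜ + μj j W = μj j Set.univ := by
            rw [add_comm]; exact measure_add_measure_compl hWm
        _ ≤ μ Set.univ + ENNReal.ofReal (η / 2) := le_of_lt hj2
        _ = (μ W + μ Wᶜ) + ENNReal.ofReal (η / 2) := by
            rw [measure_add_measure_compl hWm]
        _ ≤ (μj j W + ENNReal.ofReal (η / 2)) + ENNReal.ofReal (η / 2) := by
            gcongr
            exact hμle j
        _ = ENNReal.ofReal η + μj j W := by
            rw [add_assoc, hhalf]; exact add_comm _ _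
    exact (ENNReal.add_le_add_iff_right (measure_ne_top _ _)).1 key
  · -- distance bounds
    intro p hp q hq
    refine ⟨hge j p q, ?_⟩
    obtain ⟨hj1, _⟩ := hj₀ j hj
    obtain ⟨x, hx⟩ := hmid p q
    obtain ⟨r, hr_ball, hr_not⟩ := hkey p hp q hq x
    have hrp : (p, r) ∈ tbadᶜ := fun h => hr_not (Or.inl h)
    have hrq : (q, r) ∈ tbadᶜ := fun h => hr_not (Or.inr h)
    have h1 := hj1 (p, r) hrp
    have h2 := hj1 (q, r) hrq
    rw [Real.dist_eq] at h1 h2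
    have h1' := (abs_lt.1 h1).1
    have h2' := (abs_lt.1 h2).1
    have hball : dist r x < η / 4 := mem_ball.1 hr_ball
    have t1 : dj j p q ≤ dj j p r + dj j r q := htri j p r q
    have t2 : dj j r q = dj j q r := hsymm j r q
    have d1 : dist p r ≤ dist p x + dist x r := dist_triangle p x r
    have d2 : dist q r ≤ dist q x + dist x r := dist_triangle q x r
    have hxr : dist x r = dist r x := dist_comm x r
    have hqx : dist q x = dist x q := dist_comm q x
    linarith
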